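/- Over a flat priority alphabet (at most one letter per nonzero priority), for words u, v that end in the same letter a, u block-smaller-than v implies u priority-smaller-than v. -/

import Mathlib

/-- The priority embedding underlying the priority order: `u = u₁…u_k`,
`v = v₁u₁v₂u₂…v_ku_k` where each `vᵢ` consists of letters of priority at most
that of `uᵢ`. -/
inductive PrioEmb {α : Type*} (prio : α → ℕ) : List α → List α → Prop
  | nil : PrioEmb prio [] []
  | cons (a : α) {u v : List α} (w : List α) (hw : ∀ b ∈ w, prio b ≤ prio a)
      (h : PrioEmb prio u v) : PrioEmb prio (a :: u) (w ++ a :: v)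

/-- The priority order: `u ⊑ v` iff `u = ε`, or `u = u₁…u_k` and
`v = v₁u₁…v_ku_k` with each `vᵢ` over letters of priority at most that of `uᵢ`. -/
def PrioLE {α : Type*} (prio : α → ℕ) (u v : List α) : Prop :=
  u = [] ∨ PrioEmb prio u v

/-- Glue together a decomposition into blocks and separator letters:
`glue [(u₀,x₀),…,(u_{n-1},x_{n-1})] u_n = u₀x₀u₁x₁⋯x_{n-1}u_n`. -/
def glue {α : Type*} (ps : List (List α × α)) (last : List α) : List α :=
  (ps.map (fun p => p.1 ++ [p.2])).flatten ++ last

/-- The `i`-th block of a decomposition (`last` for the final index). -/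
def blockAt {α : Type*} (ps : List (List α × α)) (last : List α) (i : ℕ) :
    List α :=
  if h : i < ps.length then (ps.get ⟨i, h⟩).1 else last

/-- The blockSegment `v_i y_i v_{i+1} ⋯ y_{j-1} v_j` of a decomposition. -/
def blockSegment {α : Type*} (ps : List (List α × α)) (last : List α) (i j : ℕ) :
    List α :=
  glue ((ps.take j).drop i) (blockAt ps last j)

/-- The block order at priority level `p`: at level `0` (a single priority) it
is the subword order; at level `p+1`, either both words consist solely of
letters of priority `p+1` and are related by the subword order, or both words
are split at their priority-`p+1` letters into sub-blocks of lower priority and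
there is a strictly increasing witness block map `φ` sending the first block to
the first and the last block to the last, such that blocks embed recursively in
the block order and each separator letter embeds as a subword into the
corresponding blockSegment of the larger word. -/
def BlockLE {α : Type*} (prio : α → ℕ) : ℕ → List α → List α → Prop
  | 0, u, v => u.Sublist v
  | (p+1), u, v =>
      ((∀ a ∈ u, prio a = p + 1) ∧ (∀ a ∈ v, prio a = p + 1) ∧ u.Sublist v) ∨
      ∃ (us : List (List α × α)) (ulast : List α)
        (vs : List (List α × α)) (vlast : List α) (φ : ℕ → ℕ),
        u = glue us ulast ∧ v = glue vs vlast ∧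
        (∀ q ∈ us, prio q.2 = p + 1 ∧ ∀ a ∈ q.1, prio a ≤ p) ∧
        (∀ a ∈ ulast, prio a ≤ p) ∧
        (∀ q ∈ vs, prio q.2 = p + 1 ∧ ∀ a ∈ q.1, prio a ≤ p) ∧
        (∀ a ∈ vlast, prio a ≤ p) ∧
        (∀ i j, i < j → j ≤ us.length → φ i < φ j) ∧
        φ 0 = 0 ∧ φ us.length = vs.length ∧
        (∀ i ≤ us.length,
          BlockLE prio p (blockAt us ulast i) (blockAt vs vlast (φ i))) ∧
        (∀ i (h : i < us.length),
          [(us.get ⟨i, h⟩).2].Sublist (blockSegment vs vlast (φ i) (φ (i + 1))))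

section Aux

variable {α : Type*} {prio : α → ℕ}

theorem PrioEmb.append' {u1 v1 u2 v2 : List α} (h1 : PrioEmb prio u1 v1)
    (h2 : PrioEmb prio u2 v2) : PrioEmb prio (u1 ++ u2) (v1 ++ v2) := by
  induction h1 with
  | nil => simpa using h2
  | cons a w hw h ih =>
      have := PrioEmb.cons a w hw ih
      simpa using this

theorem PrioEmb.cons_left {u v : List α} {a b : α} (hb : prio b ≤ prio a)
    (h : PrioEmb prio (a :: u) v) : PrioEmb prio (a :: u) (b :: v) := by
  cases h with
  | cons _ w hw h =>
      have := PrioEmb.cons a (b :: w) (by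
        intro c hc
        rcases List.mem_cons.mp hc with rfl | hc
        · exact hb
        · exact hw c hc) h
      simpa using this

theorem sublist_prioEmb {u v : List α}
    (h : u.Sublist v) (hp : ∀ b ∈ v, ∀ c ∈ u, prio b ≤ prio c)
    {a : α} (hu : u.getLast? = some a) (hv : v.getLast? = some a) :
    PrioEmb prio u v := by
  induction h with
  | slnil => simp at hu
  | @cons u v b h ih =>
      have hune : u ≠ [] := by rintro rfl; simp at hu
      have hvne : v ≠ [] := by rintro rfl; exact hune (List.sublist_nil.mp h)
      have hv' : v.getLast? = some a := by
        rwa [show b :: v = [b] ++ v from rfl,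
          List.getLast?_append_of_ne_nil _ hvne] at hv
      have hemb := ih (fun x hx c hc => hp x (List.mem_cons_of_mem _ hx) c hc) hu hv'
      obtain ⟨c, u', rfl⟩ : ∃ c u', u = c :: u' := by
        cases u with
        | nil => exact absurd rfl hune
        | cons c u' => exact ⟨c, u', rfl⟩
      exact hemb.cons_left (hp b (List.mem_cons_self) c (List.mem_cons_self))
  | @cons_cons u v b h ih =>
      by_cases hune : u = []
      · subst hune
        have hab : b = a := by simpa using hu
        subst hab
        by_cases hvne : v = []
        · subst hvne
          exact PrioEmb.cons b [] (by simp) PrioEmb.nil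
        · have hv' : v.getLast? = some b := by
            rwa [show b :: v = [b] ++ v from rfl,
              List.getLast?_append_of_ne_nil _ hvne] at hv
          have hv2 : v.dropLast ++ [b] = v := List.dropLast_append_getLast? _ hv'
          have hw : ∀ x ∈ b :: v.dropLast, prio x ≤ prio b := by
            intro x hx
            rcases List.mem_cons.mp hx with rfl | hx
            · exact le_rfl
            · exact hp x (List.mem_cons_of_mem _ ((List.dropLast_sublist v).subset hx))
                b (List.mem_cons_self)
          have := PrioEmb.cons b (b :: v.dropLast) hw PrioEmb.nil
          have e : (b :: v.dropLast) ++ b :: [] = b :: v := by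
            simp [hv2]
          rwa [e] at this
      · have hvne : v ≠ [] := by
          rintro rfl; exact hune (List.sublist_nil.mp h)
        have hu' : u.getLast? = some a := by
          rwa [show b :: u = [b] ++ u from rfl,
            List.getLast?_append_of_ne_nil _ hune] at hu
        have hv' : v.getLast? = some a := by
          rwa [show b :: v = [b] ++ v from rfl,
            List.getLast?_append_of_ne_nil _ hvne] at hv
        have hemb := ih (fun x hx c hc =>
          hp x (List.mem_cons_of_mem _ hx) c (List.mem_cons_of_mem _ hc)) hu' hv'
        exact PrioEmb.cons b [] (by simp) hemb

theorem sublist_prioEmb_relaxed {u v : List α}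
    (h : u.Sublist v) (hp : ∀ b ∈ v, ∀ c ∈ u, prio b ≤ prio c) :
    ∃ v₁ v₂, v = v₁ ++ v₂ ∧ PrioEmb prio u v₁ := by
  rcases eq_or_ne u [] with rfl | hne
  · exact ⟨[], v, rfl, PrioEmb.nil⟩
  · set g := u.getLast hne with hg
    have hu2 : u.dropLast ++ [g] = u := List.dropLast_append_getLast hne
    rw [← hu2] at h
    rw [List.append_sublist_iff] at h
    obtain ⟨r₁, r₂, rfl, h1, h2⟩ := h
    obtain ⟨x, y, rfl⟩ := List.append_of_mem (List.singleton_sublist.mp h2)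
    refine ⟨(r₁ ++ x) ++ [g], y, by simp, ?_⟩
    have hsub : u.Sublist ((r₁ ++ x) ++ [g]) := by
      rw [← hu2]
      exact (h1.trans (List.sublist_append_left r₁ x)).append (List.Sublist.refl _)
    apply sublist_prioEmb hsub
    · intro b hb c hc
      apply hp b _ c hc
      rcases List.mem_append.mp hb with hb | hb
      · rcases List.mem_append.mp hb with hb | hb
        · exact List.mem_append_left _ hb
        · exact List.mem_append_right _ (List.mem_append_left _ hb)
      · simp at hb
        subst hb
        exact List.mem_append_right _ (List.mem_append_right _ (List.mem_cons_self))
    · exact List.getLast?_eq_getLast_of_ne_nil hne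
    · exact List.getLast?_concat

theorem glue_nil_left (last : List α) : glue ([] : List (List α × α)) last = last := by
  simp [glue]

theorem glue_cons (q : List α × α) (ps : List (List α × α)) (last : List α) :
    glue (q :: ps) last = q.1 ++ q.2 :: glue ps last := by
  simp [glue]

theorem glue_append (A B : List (List α × α)) (last : List α) :
    glue (A ++ B) last = glue A [] ++ glue B last := by
  simp [glue]

theorem glue_eq_nil {ps : List (List α × α)} {last : List α}
    (h : glue ps last = []) : ps = [] ∧ last = [] := by
  cases ps with
  | nil => simpa [glue] using h
  | cons q t => rw [glue_cons] at h; simp at h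

theorem prio_glue_le {P : ℕ} :
    ∀ {ps : List (List α × α)} {last : List α},
    (∀ q ∈ ps, prio q.2 ≤ P ∧ ∀ x ∈ q.1, prio x ≤ P) →
    (∀ x ∈ last, prio x ≤ P) → ∀ b ∈ glue ps last, prio b ≤ P := by
  intro ps
  induction ps with
  | nil => intro last _ hlast b hb; rw [glue_nil_left] at hb; exact hlast b hb
  | cons q t ih =>
      intro last hps hlast b hb
      rw [glue_cons] at hb
      rcases List.mem_append.mp hb with hb | hb
      · exact (hps q (List.mem_cons_self)).2 b hb
      · rcases List.mem_cons.mp hb with rfl | hb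
        · exact (hps q (List.mem_cons_self)).1
        · exact ih (fun r hr => hps r (List.mem_cons_of_mem _ hr)) hlast b hb

theorem glue_getLast? : ∀ {ps : List (List α × α)} (h : ps ≠ []),
    (glue ps []).getLast? = some ((ps.getLast h).2) := by
  intro ps
  induction ps with
  | nil => intro h; exact absurd rfl h
  | cons q t ih =>
      intro h
      rcases eq_or_ne t [] with rfl | ht
      · simp [glue]
      · rw [glue_cons]
        have hne : glue t [] ≠ [] := by
          intro hcon
          exact ht (glue_eq_nil hcon).1
        rw [show q.1 ++ q.2 :: glue t [] = (q.1 ++ [q.2]) ++ glue t [] by simp,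
          List.getLast?_append_of_ne_nil _ hne, ih ht, List.getLast_cons ht]

theorem blockAt_zero_cons (q : List α × α) (ps : List (List α × α)) (last : List α) :
    blockAt (q :: ps) last 0 = q.1 := by
  simp [blockAt]

theorem blockAt_succ (q : List α × α) (ps : List (List α × α)) (last : List α) (i : ℕ) :
    blockAt (q :: ps) last (i + 1) = blockAt ps last i := by
  by_cases h : i < ps.length <;> simp [blockAt, h, Nat.succ_lt_succ_iff]

theorem blockAt_drop (ps : List (List α × α)) (last : List α) {m i : ℕ} (h : m ≤ i) :
    blockAt (ps.drop m) last (i - m) = blockAt ps last i := by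
  rcases Nat.exists_eq_add_of_le h with ⟨j, rfl⟩
  have hj : m + j - m = j := by omega
  rw [hj]
  by_cases hi : m + j < ps.length
  · have hj2 : j < (ps.drop m).length := by simp; omega
    simp [blockAt, hi, hj2, List.get_eq_getElem, List.getElem_drop,
      show j < ps.length - m from by omega]
  · have hj2 : ¬ j < (ps.drop m).length := by simp; omega
    simp [blockAt, hi, hj2, show ¬ j < ps.length - m from by omega]

end Aux

section Core

variable {α : Type*} {prio : α → ℕ}

theorem piece_emb {p : ℕ} (flat : ∀ a b : α, prio a = prio b → prio a ≠ 0 → a = b)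
    {b0 : List α × α} {t : List (List α × α)}
    (hvsA : ∀ q ∈ b0 :: t, prio q.2 = p + 1 ∧ ∀ x ∈ q.1, prio x ≤ p)
    {u0 w₁ w₂ : List α} {c0 : α} (hc0 : prio c0 = p + 1)
    (hsplit : b0.1 = w₁ ++ w₂)
    (hemb : PrioEmb prio u0 w₁) :
    PrioEmb prio (u0 ++ [c0]) (glue (b0 :: t) []) := by
  set T : List α := w₂ ++ b0.2 :: glue t [] with hT
  have hglue : glue (b0 :: t) [] = w₁ ++ T := by
    rw [glue_cons, hsplit, hT, List.append_assoc]
  have hTne : T ≠ [] := by simp [hT]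
  have hlastA : (glue (b0 :: t) []).getLast? =
      some (((b0 :: t).getLast (by simp)).2) := glue_getLast? _
  have hlast_prio : prio (((b0 :: t).getLast (by simp)).2) = p + 1 :=
    (hvsA _ (List.getLast_mem _)).1
  have hceq : ((b0 :: t).getLast (by simp)).2 = c0 :=
    flat _ _ (by rw [hlast_prio, hc0]) (by rw [hlast_prio]; omega)
  have hTlast : T.getLast? = some c0 := by
    rw [hglue, List.getLast?_append_of_ne_nil _ hTne] at hlastA
    rw [hlastA, hceq]
  have hTd : T.dropLast ++ [c0] = T := List.dropLast_append_getLast? _ hTlast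
  have hprio : ∀ x ∈ T.dropLast, prio x ≤ prio c0 := by
    intro x hx
    have hxT : x ∈ T := (List.dropLast_sublist T).subset hx
    have hxg : x ∈ glue (b0 :: t) [] := by
      rw [hglue]; exact List.mem_append_right _ hxT
    have hle : prio x ≤ p + 1 := prio_glue_le
      (fun q hq => ⟨le_of_eq (hvsA q hq).1,
        fun y hy => le_trans ((hvsA q hq).2 y hy) (by omega)⟩)
      (by simp) x hxg
    omega
  have h2 : PrioEmb prio [c0] (T.dropLast ++ [c0]) := by
    have := PrioEmb.cons c0 T.dropLast hprio PrioEmb.nil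
    simpa using this
  have h3 := hemb.append' h2
  rw [hglue, ← hTd]
  exact h3

theorem step_lemma {p : ℕ} (flat : ∀ a b : α, prio a = prio b → prio a ≠ 0 → a = b)
    (IH : ∀ u v : List α, (∀ b ∈ u, prio b ≤ p) → (∀ b ∈ v, prio b ≤ p) →
      BlockLE prio p u v →
      (∃ v₁ v₂, v = v₁ ++ v₂ ∧ PrioEmb prio u v₁) ∧
      (∀ a, u.getLast? = some a → v.getLast? = some a → PrioEmb prio u v)) :
    ∀ (us vs : List (List α × α)) (φ : ℕ → ℕ) (ulast vlast : List α),
    (∀ q ∈ us, prio q.2 = p + 1 ∧ ∀ x ∈ q.1, prio x ≤ p) →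
    (∀ x ∈ ulast, prio x ≤ p) →
    (∀ q ∈ vs, prio q.2 = p + 1 ∧ ∀ x ∈ q.1, prio x ≤ p) →
    (∀ x ∈ vlast, prio x ≤ p) →
    (∀ i j, i < j → j ≤ us.length → φ i < φ j) →
    φ 0 = 0 → φ us.length = vs.length →
    (∀ i ≤ us.length, BlockLE prio p (blockAt us ulast i) (blockAt vs vlast (φ i))) →
    (∃ v₁ v₂, glue vs vlast = v₁ ++ v₂ ∧ PrioEmb prio (glue us ulast) v₁) ∧
    (∀ a, (glue us ulast).getLast? = some a → (glue vs vlast).getLast? = some a →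
      PrioEmb prio (glue us ulast) (glue vs vlast)) := by
  intro us
  induction us with
  | nil =>
      intro vs φ ulast vlast hus hul hvs hvl hmono h0 hk hblocks
      obtain rfl : vs = [] := by
        apply List.length_eq_zero_iff.mp
        simp at hk
        omega
      have hb := hblocks 0 (by simp)
      rw [h0] at hb
      simp [blockAt] at hb
      simp only [glue_nil_left]
      exact IH ulast vlast hul hvl hb
  | cons q us' ihus =>
      intro vs φ ulast vlast hus hul hvs hvl hmono h0 hk hblocks
      have hm1 : 1 ≤ φ 1 := by
        have := hmono 0 1 (by omega) (by simp)
        omega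
      have hmono_le : ∀ i j, i ≤ j → j ≤ (q :: us').length → φ i ≤ φ j := by
        intro i j hij hj
        rcases eq_or_lt_of_le hij with rfl | hlt
        · exact le_rfl
        · exact (hmono i j hlt hj).le
      have hmlen : φ 1 ≤ vs.length := by
        have := hmono_le 1 (q :: us').length (by simp) le_rfl
        omega
      cases vs with
      | nil => simp at hmlen; omega
      | cons b0 vrest =>
      obtain ⟨m', hm'⟩ : ∃ m', φ 1 = m' + 1 := ⟨φ 1 - 1, by omega⟩
      have hmlen' : m' ≤ vrest.length := by simp at hmlen; omega
      -- the first block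
      have hb0 : BlockLE prio p q.1 b0.1 := by
        have hb := hblocks 0 (by simp)
        rw [h0] at hb
        rwa [blockAt_zero_cons, blockAt_zero_cons] at hb
      obtain ⟨w₁, w₂, hw12, hembw⟩ :=
        (IH q.1 b0.1 (hus q (List.mem_cons_self)).2
          (hvs b0 (List.mem_cons_self)).2 hb0).1
      have hvsA : ∀ r ∈ b0 :: vrest.take m', prio r.2 = p + 1 ∧ ∀ x ∈ r.1, prio x ≤ p := by
        intro r hr
        rcases List.mem_cons.mp hr with rfl | hr
        · exact hvs r (List.mem_cons_self)
        · exact hvs r (List.mem_cons_of_mem _ (List.take_subset _ _ hr))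
      have hpiece : PrioEmb prio (q.1 ++ [q.2]) (glue (b0 :: vrest.take m') []) :=
        piece_emb flat hvsA (hus q (List.mem_cons_self)).1 hw12 hembw
      -- the tail
      set φ' : ℕ → ℕ := fun j => φ (j + 1) - φ 1 with hφ'
      have hφ1le : ∀ i, i + 1 ≤ (q :: us').length → φ 1 ≤ φ (i + 1) := by
        intro i hi
        exact hmono_le 1 (i + 1) (by omega) hi
      have hmono' : ∀ i j, i < j → j ≤ us'.length → φ' i < φ' j := by
        intro i j hij hj
        have h1 : φ 1 ≤ φ (i + 1) := hφ1le i (by simp; omega)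
        have h2 : φ (i + 1) < φ (j + 1) := hmono (i + 1) (j + 1) (by omega) (by simp; omega)
        simp only [hφ']
        omega
      have h0' : φ' 0 = 0 := by simp [hφ']
      have hk' : φ' us'.length = (vrest.drop m').length := by
        have hkk : φ (us'.length + 1) = vrest.length + 1 := by simpa using hk
        have h1 : φ 1 ≤ φ (us'.length + 1) := hφ1le us'.length (by simp)
        simp only [hφ', List.length_drop]
        omega
      have hblocks' : ∀ i ≤ us'.length,
          BlockLE prio p (blockAt us' ulast i) (blockAt (vrest.drop m') vlast (φ' i)) := by
        intro i hi
        have hb := hblocks (i + 1) (by simp; omega)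
        rw [blockAt_succ] at hb
        have h1 : φ 1 ≤ φ (i + 1) := hφ1le i (by simp; omega)
        have hdrop : blockAt ((b0 :: vrest).drop (m' + 1)) vlast (φ (i + 1) - (m' + 1)) =
            blockAt (b0 :: vrest) vlast (φ (i + 1)) :=
          blockAt_drop _ _ (by omega)
        rw [List.drop_succ_cons] at hdrop
        have : φ' i = φ (i + 1) - (m' + 1) := by simp only [hφ']; omega
        rw [this, hdrop]
        exact hb
      obtain ⟨tailRel, tailExact⟩ := ihus (vrest.drop m') φ' ulast vlast
        (fun r hr => hus r (List.mem_cons_of_mem _ hr)) hul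
        (fun r hr => hvs r (List.mem_cons_of_mem _ (List.drop_subset _ _ hr))) hvl
        hmono' h0' hk' hblocks'
      -- decompositions
      have hEu : glue (q :: us') ulast = (q.1 ++ [q.2]) ++ glue us' ulast := by
        rw [glue_cons, List.append_assoc]; rfl
      have hEv : glue (b0 :: vrest) vlast =
          glue (b0 :: vrest.take m') [] ++ glue (vrest.drop m') vlast := by
        conv_lhs => rw [show b0 :: vrest = (b0 :: vrest.take m') ++ vrest.drop m' by
          rw [List.cons_append, List.take_append_drop]]
        rw [glue_append]
      constructor
      · obtain ⟨v₁, v₂, hsplit2, hembt⟩ := tailRel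
        refine ⟨glue (b0 :: vrest.take m') [] ++ v₁, v₂, ?_, ?_⟩
        · rw [hEv, hsplit2, List.append_assoc]
        · rw [hEu]; exact hpiece.append' hembt
      · intro a hua hva
        rcases eq_or_ne (glue us' ulast) [] with hnil | hne
        · obtain ⟨rfl, rfl⟩ := glue_eq_nil hnil
          have hvs'nil : vrest.drop m' = [] := by
            apply List.length_eq_zero_iff.mp
            have h2 := hk'
            simp only [List.length_nil] at h2
            omega
          have hua' : a = q.2 := by
            rw [hEu, glue_nil_left, List.append_nil, List.getLast?_concat] at hua
            exact (Option.some.inj hua).symm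
          rcases eq_or_ne vlast [] with rfl | hvl2
          · rw [hEu, hEv, hvs'nil, glue_nil_left, List.append_nil, List.append_nil]
            exact hpiece
          · exfalso
            have h1 : (glue (b0 :: vrest) vlast).getLast? = vlast.getLast? := by
              rw [hEv, hvs'nil, glue_nil_left]
              exact List.getLast?_append_of_ne_nil _ hvl2
            rw [h1] at hva
            have hmem : a ∈ vlast := by
              obtain ⟨hh, rfl⟩ := List.mem_getLast?_eq_getLast
                (show a ∈ vlast.getLast? from hva)
              exact List.getLast_mem _
            have hle := hvl a hmem
            have heq := (hus q (List.mem_cons_self)).1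
            rw [← hua'] at heq
            omega
        · have hua' : (glue us' ulast).getLast? = some a := by
            rwa [hEu, List.getLast?_append_of_ne_nil _ hne] at hua
          have hvne : glue (vrest.drop m') vlast ≠ [] := by
            intro hcon
            obtain ⟨hd, hl⟩ := glue_eq_nil hcon
            rcases eq_or_ne us' [] with rfl | hus'ne
            · have haul : a ∈ ulast := by
                rw [glue_nil_left] at hua'
                obtain ⟨hh, rfl⟩ := List.mem_getLast?_eq_getLast
                  (show a ∈ ulast.getLast? from hua')
                exact List.getLast_mem _
              have h1 : (glue (b0 :: vrest) vlast).getLast? =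
                  some (((b0 :: vrest.take m').getLast (by simp)).2) := by
                rw [hEv, hd, hl, glue_nil_left, List.append_nil]
                exact glue_getLast? _
              rw [h1] at hva
              have he : ((b0 :: vrest.take m').getLast (by simp)).2 = a :=
                Option.some.inj hva
              have hp1 : prio (((b0 :: vrest.take m').getLast (by simp)).2) = p + 1 :=
                (hvsA _ (List.getLast_mem _)).1
              have hle := hul a haul
              rw [he] at hp1
              omega
            · have hlen0 : (vrest.drop m').length = 0 := by rw [hd]; rfl
              have hpos : 0 < us'.length := List.length_pos_iff.mpr hus'ne
              have := hmono' 0 us'.length hpos le_rfl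
              omega
          have hva' : (glue (vrest.drop m') vlast).getLast? = some a := by
            rwa [hEv, List.getLast?_append_of_ne_nil _ hvne] at hva
          have htail := tailExact a hua' hva'
          rw [hEu, hEv]
          exact hpiece.append' htail

theorem blockLE_zero_iff {u v : List α} : BlockLE prio 0 u v ↔ u.Sublist v := Iff.rfl

theorem blockLE_succ_iff {p : ℕ} {u v : List α} : BlockLE prio (p + 1) u v ↔
    ((∀ a ∈ u, prio a = p + 1) ∧ (∀ a ∈ v, prio a = p + 1) ∧ u.Sublist v) ∨
      ∃ (us : List (List α × α)) (ulast : List α)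
        (vs : List (List α × α)) (vlast : List α) (φ : ℕ → ℕ),
        u = glue us ulast ∧ v = glue vs vlast ∧
        (∀ q ∈ us, prio q.2 = p + 1 ∧ ∀ a ∈ q.1, prio a ≤ p) ∧
        (∀ a ∈ ulast, prio a ≤ p) ∧
        (∀ q ∈ vs, prio q.2 = p + 1 ∧ ∀ a ∈ q.1, prio a ≤ p) ∧
        (∀ a ∈ vlast, prio a ≤ p) ∧
        (∀ i j, i < j → j ≤ us.length → φ i < φ j) ∧
        φ 0 = 0 ∧ φ us.length = vs.length ∧
        (∀ i ≤ us.length,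
          BlockLE prio p (blockAt us ulast i) (blockAt vs vlast (φ i))) ∧
        (∀ i (h : i < us.length),
          [(us.get ⟨i, h⟩).2].Sublist (blockSegment vs vlast (φ i) (φ (i + 1)))) :=
  Iff.rfl

theorem main_lemma (flat : ∀ a b : α, prio a = prio b → prio a ≠ 0 → a = b) :
    ∀ (p : ℕ) (u v : List α),
    (∀ b ∈ u, prio b ≤ p) → (∀ b ∈ v, prio b ≤ p) → BlockLE prio p u v →
    (∃ v₁ v₂, v = v₁ ++ v₂ ∧ PrioEmb prio u v₁) ∧
    (∀ a, u.getLast? = some a → v.getLast? = some a → PrioEmb prio u v) := by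
  intro p
  induction p with
  | zero =>
      intro u v hu hv h
      rw [blockLE_zero_iff] at h
      have hp : ∀ b ∈ v, ∀ c ∈ u, prio b ≤ prio c := by
        intro b hb c hc
        have := hv b hb
        omega
      exact ⟨sublist_prioEmb_relaxed h hp,
        fun a ha hva => sublist_prioEmb h hp ha hva⟩
  | succ p ih =>
      intro u v hu hv h
      rw [blockLE_succ_iff] at h
      rcases h with ⟨hu1, hv1, hsub⟩ |
        ⟨us, ulast, vs, vlast, φ, rfl, rfl, hus, hul, hvs, hvl, hmono, h0, hk, hblocks, -⟩
      · have hp : ∀ b ∈ v, ∀ c ∈ u, prio b ≤ prio c := by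
          intro b hb c hc
          rw [hv1 b hb, hu1 c hc]
        exact ⟨sublist_prioEmb_relaxed hsub hp,
          fun a ha hva => sublist_prioEmb hsub hp ha hva⟩
      · exact step_lemma flat ih us vs φ ulast vlast hus hul hvs hvl hmono h0 hk hblocks

end Core

/-- Over a flat priority alphabet (at most one letter per nonzero priority),
for words ending in the same letter, the block order refines the priority
order. -/
theorem blockLE_prioLE_of_flat {α : Type*} (prio : α → ℕ) (d : ℕ)
    (hd : ∀ a : α, prio a ≤ d)
    (flat : ∀ a b : α, prio a = prio b → prio a ≠ 0 → a = b)
    (u v : List α) (a : α)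
    (h : BlockLE prio d (u ++ [a]) (v ++ [a])) :
    PrioLE prio (u ++ [a]) (v ++ [a]) :=
  Or.inr <| (main_lemma flat d (u ++ [a]) (v ++ [a]) (fun b _ => hd b)
    (fun b _ => hd b) h).2 a (List.getLast?_concat) (List.getLast?_concat)
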